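/- (Rank-4 Poisson representation of the Chaplygin sleigh.) For the Chaplygin sleigh on a horizontal plane (U = 0), with defining vector field v on ℝ⁵, scaling field u = v₁ ∂/∂v₁ + ω ∂/∂ω, translation fields u_x = ∂/∂x and u_y = ∂/∂y, and energy E = ½(m v₁² + (I+ma²) ω²), define the matrix field J⁽⁴⁾ = v∧u + u_x∧u_y. Then for every point p ∈ ℝ⁵, J⁽⁴⁾(p)·∇E(p) = 2E(p)·v(p); in particular on the set {E ≠ 0} the system is conformally Hamiltonian: v = (2E)⁻¹ J⁽⁴⁾ ∇E. -/
import Mathlib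


/-- The Chaplygin sleigh on a horizontal plane (`U = 0`): the system on ℝ⁵, coordinates
`p = (v₁, ω, x, y, φ)`, parameters `m, I, a > 0`:
`m v̇₁ = m a ω²`, `(I+ma²) ω̇ = −m a ω v₁`, `ẋ = v₁ cos φ`, `ẏ = v₁ sin φ`, `φ̇ = ω`. -/
noncomputable def sleigh (m I a : ℝ) (p : Fin 5 → ℝ) : Fin 5 → ℝ :=
  ![a * (p 1) ^ 2,
    -(m * a * (p 1) * (p 0)) / (I + m * a ^ 2),
    (p 0) * Real.cos (p 4),
    (p 0) * Real.sin (p 4),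
    p 1]

/-- The energy of the Chaplygin sleigh on a horizontal plane:
`E = ½(m v₁² + (I+ma²) ω²)`. -/
noncomputable def sleighE (m I a : ℝ) (p : Fin 5 → ℝ) : ℝ :=
  (1 / 2) * (m * (p 0) ^ 2 + (I + m * a ^ 2) * (p 1) ^ 2)

/-- The wedge of two vector fields: `(v ∧ u)_ij = v_i u_j − v_j u_i`. -/
noncomputable def wedge {n : ℕ} (v u : (Fin n → ℝ) → (Fin n → ℝ)) (x : Fin n → ℝ) :
    Matrix (Fin n) (Fin n) ℝ :=
  Matrix.of fun i j => v x i * u x j - v x j * u x i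

/-- The gradient of a scalar function on ℝⁿ, as the vector of partial derivatives. -/
noncomputable def grad {n : ℕ} (F : (Fin n → ℝ) → ℝ) (x : Fin n → ℝ) : Fin n → ℝ :=
  fun j => fderiv ℝ F x (Pi.single j 1)


lemma grad_sleighE (m I a : ℝ) (p : Fin 5 → ℝ) :
    grad (sleighE m I a) p = ![m * p 0, (I + m * a ^ 2) * p 1, 0, 0, 0] := by
  have h0 : HasFDerivAt (fun q : Fin 5 → ℝ => q 0)
      (ContinuousLinearMap.proj 0 : (Fin 5 → ℝ) →L[ℝ] ℝ) p :=
    (ContinuousLinearMap.proj 0 : (Fin 5 → ℝ) →L[ℝ] ℝ).hasFDerivAt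
  have h1 : HasFDerivAt (fun q : Fin 5 → ℝ => q 1)
      (ContinuousLinearMap.proj 1 : (Fin 5 → ℝ) →L[ℝ] ℝ) p :=
    (ContinuousLinearMap.proj 1 : (Fin 5 → ℝ) →L[ℝ] ℝ).hasFDerivAt
  have heq : sleighE m I a = fun q : Fin 5 → ℝ =>
      (1/2) * (m * (q 0 * q 0) + (I + m * a ^ 2) * (q 1 * q 1)) := by
    funext q; simp [sleighE]; ring
  have hE : HasFDerivAt (sleighE m I a)
      ((1/2 : ℝ) • ((m • (p 0 • (ContinuousLinearMap.proj 0 : (Fin 5 → ℝ) →L[ℝ] ℝ)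
          + p 0 • (ContinuousLinearMap.proj 0 : (Fin 5 → ℝ) →L[ℝ] ℝ)))
        + ((I + m * a ^ 2) • (p 1 • (ContinuousLinearMap.proj 1 : (Fin 5 → ℝ) →L[ℝ] ℝ)
          + p 1 • (ContinuousLinearMap.proj 1 : (Fin 5 → ℝ) →L[ℝ] ℝ))))) p := by
    rw [heq]
    exact (((h0.mul h0).const_mul m).add ((h1.mul h1).const_mul (I + m * a ^ 2))).const_mul (1/2)
  funext j
  show fderiv ℝ (sleighE m I a) p (Pi.single j 1) = _
  rw [hE.fderiv]
  fin_cases j <;>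
    simp [ContinuousLinearMap.proj, Pi.single_apply] <;> ring

/-- **rank-4 Poisson representation of the Chaplygin sleigh.** With the scaling
field `u = v₁∂/∂v₁ + ω∂/∂ω`, the translation fields `u_x = ∂/∂x`, `u_y = ∂/∂y`, and
`J⁽⁴⁾ = v∧u + u_x∧u_y`, one has `J⁽⁴⁾(p)·∇E(p) = 2E(p)·v(p)` for every `p ∈ ℝ⁵`; in particular
on `{E ≠ 0}` the sleigh is conformally Hamiltonian: `v = (2E)⁻¹ J⁽⁴⁾ ∇E`. -/
theorem sleigh_rank_four_poisson
    (m I a : ℝ) (hm : 0 < m) (hI : 0 < I) (ha : 0 < a) :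
    ∀ p : Fin 5 → ℝ,
      ((wedge (sleigh m I a) (fun q => ![q 0, q 1, 0, 0, 0]) p
          + wedge (fun _ => ![0, 0, 1, 0, 0]) (fun _ => ![0, 0, 0, 1, 0]) p)).mulVec
          (grad (sleighE m I a) p)
        = (2 * sleighE m I a p) • sleigh m I a p := by
  intro p
  have hD : I + m * a ^ 2 ≠ 0 := by positivity
  funext i
  rw [grad_sleighE]
  fin_cases i <;>
    simp [Matrix.mulVec, dotProduct, wedge, sleigh, sleighE, Fin.sum_univ_five] <;>
    (try field_simp) <;> ring
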